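/- Let D be a directed graph and O an ornamentation of D. Define the reorientation R_O of tc(D) by rev(R_O) = {(u,v) ∈ tc(D) : u ∈ O(v)}. Then orn_{R_O} = O, i.e., the map O ↦ R_O is a section of the map R ↦ orn_R. Consequently, R ↦ orn_R is an order-preserving surjection from the reorientation lattice of tc(D) (ordered by inclusion of reversed edge sets) onto the ornamentation lattice Orn(D). -/

import Mathlib

/-- A directed path from `u` to `v` in the digraph `D` using only vertices of `U`. -/
def pathIn {V : Type*} (D : V → V → Prop) (U : Set V) (u v : V) : Prop :=
  Relation.ReflTransGen (fun a b => D a b ∧ a ∈ U ∧ b ∈ U) u v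

/-- An ornament of `D` at `v`. -/
def IsOrnament {V : Type*} (D : V → V → Prop) (v : V) (U : Set V) : Prop :=
  v ∈ U ∧ ∀ u ∈ U, pathIn D U u v

/-- An ornamentation of `D`. -/
def IsOrnamentation {V : Type*} (D : V → V → Prop) (O : V → Set V) : Prop :=
  (∀ v, IsOrnament D v (O v)) ∧ ∀ u v, u ∈ O v → O u ⊆ O v

/-- The inclusion maximal ornament of `D` at `v` contained in `X`. -/
def maxOrnIn {V : Type*} (D : V → V → Prop) (v : V) (X : Set V) : Set V :=
  ⋃₀ {U | IsOrnament D v U ∧ U ⊆ X}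

/-- The ornamentation `orn_R` associated to a reorientation with reversed edge set `rev`. -/
def ornOfRev {V : Type*} (D rev : V → V → Prop) (v : V) : Set V :=
  maxOrnIn D v {u | Relation.ReflTransGen rev u v}

/-- The reorientation `R_O` of `tc(D)` associated to an ornamentation `O`:
an edge `(u,v)` of `tc(D)` is reversed iff `u ∈ O v`. -/
def revOfOrn {V : Type*} (D : V → V → Prop) (O : V → Set V) : V → V → Prop :=
  fun u v => Relation.TransGen D u v ∧ u ∈ O v

lemma ornOfRev_revOfOrn_eq {V : Type*} (D : V → V → Prop) (O : V → Set V)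
    (hO : IsOrnamentation D O) : ornOfRev D (revOfOrn D O) = O := by
  funext v
  apply Set.eq_of_subset_of_subset
  · have key : ∀ x, Relation.ReflTransGen (revOfOrn D O) x v → x ∈ O v := by
      intro x hx
      induction hx using Relation.ReflTransGen.head_induction_on with
      | refl => exact (hO.1 v).1
      | head h _ ih => exact hO.2 _ _ ih h.2
    rintro x ⟨U, ⟨_, hUX⟩, hxU⟩
    exact key x (hUX hxU)
  · intro x hx
    refine ⟨O v, ⟨hO.1 v, ?_⟩, hx⟩
    intro u hu
    rcases eq_or_ne u v with rfl | hne
    · exact Relation.ReflTransGen.refl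
    · refine Relation.ReflTransGen.single ⟨?_, hu⟩
      have hp : Relation.ReflTransGen D u v :=
        Relation.ReflTransGen.mono (fun a b (h : D a b ∧ a ∈ O v ∧ b ∈ O v) => h.1) u v
          ((hO.1 v).2 u hu)
      exact (Relation.reflTransGen_iff_eq_or_transGen.mp hp).resolve_left
        (fun h => hne h.symm)

/-- `orn_{R_O} = O`, i.e. `O ↦ R_O` is a section of `R ↦ orn_R`; consequently `R ↦ orn_R`
is an order-preserving surjection from the reorientation lattice of `tc(D)` onto the
ornamentation lattice of `D`. -/
theorem ornOfRev_revOfOrn {V : Type*} (D : V → V → Prop) (O : V → Set V)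
    (hO : IsOrnamentation D O) :
    ornOfRev D (revOfOrn D O) = O ∧
    (∀ rev₁ rev₂ : V → V → Prop,
      (∀ u v, rev₁ u v → Relation.TransGen D u v) →
      (∀ u v, rev₂ u v → Relation.TransGen D u v) →
      (∀ u v, rev₁ u v → rev₂ u v) →
      ∀ v, ornOfRev D rev₁ v ⊆ ornOfRev D rev₂ v) ∧
    (∀ O' : V → Set V, IsOrnamentation D O' →
      ∃ rev : V → V → Prop, (∀ u v, rev u v → Relation.TransGen D u v) ∧
        ornOfRev D rev = O') := by
  refine ⟨ornOfRev_revOfOrn_eq D O hO, ?_, ?_⟩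
  · rintro rev₁ rev₂ _ _ hsub v x ⟨U, ⟨hU, hUX⟩, hxU⟩
    exact ⟨U, ⟨hU, fun u hu =>
      Relation.ReflTransGen.mono (fun a b => hsub a b) u v (hUX hu)⟩, hxU⟩
  · intro O' hO'
    exact ⟨revOfOrn D O', fun u v h => h.1, ornOfRev_revOfOrn_eq D O' hO'⟩
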